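/- Let G=(V,E) be a finite graph, (𝒯,𝐓) a tree decomposition of G whose tree is rooted, and v_1,…,v_ℓ a depth-first traversal of 𝒯. Then for every i ∈ [1,ℓ], every node v ∈ Θ_i, and every edge (s,t) ∈ E: if s ∈ Ψ_{>i−1}(v) then t ∈ Ψ_{>i−1}(v) ∪ 𝐓(v), and if t ∈ Ψ_{>i−1}(v) then s ∈ Ψ_{>i−1}(v) ∪ 𝐓(v). -/

import Mathlib

universe u v

/-- A leaf of a graph: a node with at most one neighbour. -/
def IsTreeLeaf {𝒱 : Type v} (T : SimpleGraph 𝒱) (x : 𝒱) : Prop :=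
  (T.neighborSet x).Subsingleton

/-- `(T, B)` is a tree decomposition of the graph with vertex set `V` and edge
relation `E`. -/
def IsTreeDecomp {V : Type u} {𝒱 : Type v} (E : V → V → Prop) (T : SimpleGraph 𝒱)
    (B : 𝒱 → Finset V) : Prop :=
  T.IsTree ∧ (∀ s t : V, E s t → ∃ x : 𝒱, s ∈ B x ∧ t ∈ B x) ∧
    ∀ s : V, (T.induce {x : 𝒱 | s ∈ B x}).Connected

/-- A nice (rooted) tree decomposition: every leaf has a singleton bag, every vertex
is the bag of some leaf, and along every tree edge one bag is obtained from the other
by adding exactly one vertex. -/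
def IsNiceTD {V : Type u} {𝒱 : Type v} [DecidableEq V] (E : V → V → Prop)
    (T : SimpleGraph 𝒱) (B : 𝒱 → Finset V) (root : 𝒱) : Prop :=
  IsTreeDecomp E T B ∧
  (∀ x : 𝒱, IsTreeLeaf T x → ∃ s : V, B x = {s}) ∧
  (∀ s : V, ∃ x : 𝒱, IsTreeLeaf T x ∧ B x = {s}) ∧
  ∀ x y : 𝒱, T.Adj x y →
    (∃ s : V, s ∉ B x ∧ B y = insert s (B x)) ∨ (∃ s : V, s ∉ B y ∧ B x = insert s (B y))

/-- A depth-first traversal `vs 1, …, vs ℓ` of the rooted tree `T`: it starts and ends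
at the root, consecutive nodes are adjacent, and every oriented edge of `T` occurs
exactly once among consecutive pairs. -/
structure IsDFT {𝒱 : Type v} (T : SimpleGraph 𝒱) (root : 𝒱) (ℓ : ℕ) (vs : ℕ → 𝒱) :
    Prop where
  one_le : 1 ≤ ℓ
  first : vs 1 = root
  last : vs ℓ = root
  adj : ∀ j : ℕ, 1 ≤ j → j < ℓ → T.Adj (vs j) (vs (j + 1))
  once : ∀ a b : 𝒱, T.Adj a b → ∃! j : ℕ, 1 ≤ j ∧ j < ℓ ∧ vs j = a ∧ vs (j + 1) = b

/-- `x` is an ancestor of `y` (w.r.t. `root`): `x` lies on the path from the root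
to `y`.  (In a tree the path between two nodes is unique.) -/
def Anc {𝒱 : Type v} (T : SimpleGraph 𝒱) (root x y : 𝒱) : Prop :=
  ∀ p : T.Walk root y, p.IsPath → x ∈ p.support

/-- `Θ_i`: the set of ancestors of `vs i`. -/
def Theta {𝒱 : Type v} (T : SimpleGraph 𝒱) (root : 𝒱) (vs : ℕ → 𝒱) (i : ℕ) : Set 𝒱 :=
  {x | Anc T root x (vs i)}

/-- `Θ_{≤ i} = ⋃_{1 ≤ j ≤ i} Θ_j`. -/
def ThetaLe {𝒱 : Type v} (T : SimpleGraph 𝒱) (root : 𝒱) (vs : ℕ → 𝒱) (i : ℕ) : Set 𝒱 :=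
  {x | ∃ j : ℕ, 1 ≤ j ∧ j ≤ i ∧ x ∈ Theta T root vs j}

/-- `Ψ_i = ⋃_{x ∈ Θ_i} B x`. -/
def Psi {V : Type u} {𝒱 : Type v} (T : SimpleGraph 𝒱) (root : 𝒱) (vs : ℕ → 𝒱)
    (B : 𝒱 → Finset V) (i : ℕ) : Set V :=
  {s | ∃ x ∈ Theta T root vs i, s ∈ B x}

/-- `Ψ_{≤ i} = ⋃_{1 ≤ j ≤ i} Ψ_j`. -/
def PsiLe {V : Type u} {𝒱 : Type v} (T : SimpleGraph 𝒱) (root : 𝒱) (vs : ℕ → 𝒱)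
    (B : 𝒱 → Finset V) (i : ℕ) : Set V :=
  {s | ∃ j : ℕ, 1 ≤ j ∧ j ≤ i ∧ s ∈ Psi T root vs B j}

/-- `x = n_i(w)`: `x` is the lowest ancestor of `w` belonging to `Θ_{≤ i}`. -/
def LowestAnc {𝒱 : Type v} (T : SimpleGraph 𝒱) (root : 𝒱) (vs : ℕ → 𝒱) (i : ℕ)
    (w x : 𝒱) : Prop :=
  Anc T root x w ∧ x ∈ ThetaLe T root vs i ∧
    ∀ y : 𝒱, Anc T root y w → y ∈ ThetaLe T root vs i → Anc T root y x

/-- `r = r(s)`: the node of `𝒯^s = {x | s ∈ B x}` closest to the root. -/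
def IsBagRoot {V : Type u} {𝒱 : Type v} (T : SimpleGraph 𝒱) (root : 𝒱)
    (B : 𝒱 → Finset V) (s : V) (r : 𝒱) : Prop :=
  s ∈ B r ∧ ∀ x : 𝒱, s ∈ B x → Anc T root r x

/-- `Ψ_{> i-1}(x) = {s ∈ Ψ_{> i-1} | n_i(s) = x}`, where `n_i(s) = n_i(r(s))`. -/
def PsiGtAt {V : Type u} {𝒱 : Type v} (T : SimpleGraph 𝒱) (root : 𝒱) (vs : ℕ → 𝒱)
    (B : 𝒱 → Finset V) (i : ℕ) (x : 𝒱) : Set V :=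
  {s | s ∉ PsiLe T root vs B (i - 1) ∧
    ∃ r : 𝒱, IsBagRoot T root B s r ∧ LowestAnc T root vs i r x}


section AncLemmas

open SimpleGraph Walk

variable {𝒱 : Type v} {T : SimpleGraph 𝒱}

noncomputable def thePath (hT : T.IsTree) (a b : 𝒱) : T.Walk a b :=
  (hT.existsUnique_path a b).choose

lemma thePath_isPath (hT : T.IsTree) (a b : 𝒱) : (thePath hT a b).IsPath :=
  (hT.existsUnique_path a b).choose_spec.1

lemma eq_thePath (hT : T.IsTree) {a b : 𝒱} (p : T.Walk a b) (hp : p.IsPath) :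
    p = thePath hT a b :=
  (hT.existsUnique_path a b).choose_spec.2 p hp

lemma anc_iff (hT : T.IsTree) {root x y : 𝒱} :
    Anc T root x y ↔ x ∈ (thePath hT root y).support := by
  constructor
  · intro h; exact h _ (thePath_isPath hT root y)
  · intro h p hp; rwa [eq_thePath hT p hp]

lemma anc_refl {root x : 𝒱} : Anc T root x x := fun p _ => p.end_mem_support

lemma anc_trans {root x y z : 𝒱} (h1 : Anc T root x y) (h2 : Anc T root y z) :
    Anc T root x z := by
  classical
  intro p hp
  have hy : y ∈ p.support := h2 p hp
  exact p.support_takeUntil_subset hy (h1 (p.takeUntil y hy) (hp.takeUntil hy))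

lemma anc_antisymm (hT : T.IsTree) {root x y : 𝒱} (h1 : Anc T root x y)
    (h2 : Anc T root y x) : x = y := by
  classical
  have hp := thePath_isPath hT root y
  have hx : x ∈ (thePath hT root y).support := (anc_iff hT).1 h1
  have hy : y ∈ ((thePath hT root y).takeUntil x hx).support := h2 _ (hp.takeUntil hx)
  have hnodup : (thePath hT root y).support.Nodup := hp.support_nodup
  rw [← (thePath hT root y).take_spec hx, Walk.support_append] at hnodup
  have hdisj := List.disjoint_of_nodup_append hnodup
  by_contra hne
  have hy2 : y ∈ ((thePath hT root y).dropUntil x hx).support := Walk.end_mem_support _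
  rw [Walk.support_eq_cons] at hy2
  rcases List.mem_cons.1 hy2 with h | h
  · exact hne h.symm
  · exact hdisj hy h
lemma append_takeUntil_isPath [DecidableEq 𝒱] {u c a : 𝒱} {P : T.Walk u c} {q : T.Walk c a}
    (h : (P.append q).IsPath) {r : 𝒱} (hr : r ∈ q.support) :
    (P.append (q.takeUntil r hr)).IsPath := by
  rw [Walk.isPath_def, Walk.support_append] at h ⊢
  have hspec := congrArg Walk.support (q.take_spec hr)
  rw [Walk.support_append] at hspec
  have h3 := congrArg List.tail hspec
  rw [Walk.support_eq_cons (q.takeUntil r hr)] at h3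
  simp only [List.cons_append, List.tail_cons] at h3
  refine List.Nodup.sublist (List.Sublist.append_left ?_ P.support) h
  rw [← h3]
  exact List.sublist_append_left _ _

lemma anc_comparable (hT : T.IsTree) {root x y z : 𝒱} (hx : Anc T root x z)
    (hy : Anc T root y z) : Anc T root x y ∨ Anc T root y x := by
  classical
  have hpp := thePath_isPath hT root z
  have hxs : x ∈ (thePath hT root z).support := (anc_iff hT).1 hx
  have hys : y ∈ (thePath hT root z).support := (anc_iff hT).1 hy
  by_cases h : y ∈ ((thePath hT root z).takeUntil x hxs).support
  · right
    intro p' hp'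
    rw [eq_thePath hT p' hp',
      ← eq_thePath hT ((thePath hT root z).takeUntil x hxs) (hpp.takeUntil hxs)]
    exact h
  · left
    have hyd : y ∈ ((thePath hT root z).dropUntil x hxs).support := by
      have hs := hys
      rw [← (thePath hT root z).take_spec hxs, Walk.mem_support_append_iff] at hs
      tauto
    have hqp : (((thePath hT root z).takeUntil x hxs).append
        (((thePath hT root z).dropUntil x hxs).takeUntil y hyd)).IsPath :=
      append_takeUntil_isPath (by rw [(thePath hT root z).take_spec hxs]; exact hpp) hyd
    intro p' hp'
    rw [eq_thePath hT p' hp', ← eq_thePath hT _ hqp, Walk.mem_support_append_iff]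
    left
    exact Walk.end_mem_support _

lemma anc_reroot (hT : T.IsTree) {root c a b : 𝒱} (hca : Anc T root c a)
    (hcb : ¬ Anc T root c b) : Anc T b c a := by
  classical
  intro P hP
  by_contra hc
  have hmem : c ∈ (thePath hT root a).support := (anc_iff hT).1 hca
  rw [← eq_thePath hT ((thePath hT root b).append P).bypass (Walk.bypass_isPath _)] at hmem
  have := Walk.support_bypass_subset _ hmem
  rw [Walk.mem_support_append_iff] at this
  rcases this with h | h
  · exact hcb ((anc_iff hT).2 h)
  · exact hc h

lemma anc_meet (hT : T.IsTree) {root x y z : 𝒱} (hxy : Anc T root x y) (hxz : Anc T root x z)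
    (H : ∀ w, Anc T root w z → Anc T root w y → Anc T root w x) :
    Anc T y x z := by
  classical
  have hpy := thePath_isPath hT root y
  have hpz := thePath_isPath hT root z
  have hxy' : x ∈ (thePath hT root y).support := (anc_iff hT).1 hxy
  have hxz' : x ∈ (thePath hT root z).support := (anc_iff hT).1 hxz
  set qy := (thePath hT root y).dropUntil x hxy' with hqy
  set qz := (thePath hT root z).dropUntil x hxz' with hqz
  have hWp : (qy.reverse.append qz).IsPath := by
    rw [Walk.isPath_def, Walk.support_append, Walk.support_reverse]
    rw [List.nodup_append]
    refine ⟨List.nodup_reverse.2 (hpy.dropUntil hxy').support_nodup,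
      List.Nodup.sublist (List.tail_sublist _) (hpz.dropUntil hxz').support_nodup, ?_⟩
    intro v hv1 w hv2 hvw
    rw [← hvw] at hv2
    rw [List.mem_reverse] at hv1
    have hvx : v ≠ x := by
      intro h; subst h
      have hnd := (hpz.dropUntil hxz').support_nodup
      rw [Walk.support_eq_cons qz] at hnd
      exact (List.nodup_cons.1 hnd).1 hv2
    have hvz : Anc T root v z := by
      intro p hp; rw [eq_thePath hT p hp]
      exact (thePath hT root z).support_dropUntil_subset hxz' (List.mem_of_mem_tail hv2)
    have hvy : Anc T root v y := by
      intro p hp; rw [eq_thePath hT p hp]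
      exact (thePath hT root y).support_dropUntil_subset hxy' hv1
    have hmem : v ∈ ((thePath hT root z).takeUntil x hxz').support := by
      have h1 := (anc_iff hT).1 (H v hvz hvy)
      rwa [← eq_thePath hT _ (hpz.takeUntil hxz')] at h1
    have hnodup := hpz.support_nodup
    rw [← (thePath hT root z).take_spec hxz', Walk.support_append] at hnodup
    exact (List.disjoint_of_nodup_append hnodup) hmem hv2
  intro p' hp'
  rw [eq_thePath hT p' hp', ← eq_thePath hT _ hWp, Walk.mem_support_append_iff]
  left
  rw [Walk.support_reverse, List.mem_reverse]
  exact Walk.start_mem_support _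

lemma isPath_concat {u a b : 𝒱} {p : T.Walk u a} (hp : p.IsPath) (h : T.Adj a b)
    (hb : b ∉ p.support) : (p.concat h).IsPath := by
  rw [Walk.isPath_def, Walk.support_concat]
  rw [List.nodup_append]
  exact ⟨hp.support_nodup, List.nodup_singleton b, by
    intro a ha c hc; rw [List.mem_singleton.1 hc]; rintro rfl; exact hb ha⟩

lemma anc_of_adj (hT : T.IsTree) {root a b w : 𝒱} (hadj : T.Adj a b)
    (hw : Anc T root w b) (hne : w ≠ b) : Anc T root w a := by
  classical
  have hpa := thePath_isPath hT root a
  by_cases hb : b ∈ (thePath hT root a).support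
  · have hq : ((thePath hT root a).takeUntil b hb).IsPath := hpa.takeUntil hb
    have hw' : w ∈ ((thePath hT root a).takeUntil b hb).support := by
      have h1 := (anc_iff hT).1 hw
      rwa [← eq_thePath hT _ hq] at h1
    intro p hp
    rw [eq_thePath hT p hp]
    exact (thePath hT root a).support_takeUntil_subset hb hw'
  · have hcp : ((thePath hT root a).concat hadj).IsPath := isPath_concat hpa hadj hb
    have hw' := (anc_iff hT).1 hw
    rw [← eq_thePath hT _ hcp, Walk.support_concat,
      List.mem_append] at hw'
    intro p hp
    rw [eq_thePath hT p hp]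
    rcases hw' with h | h
    · exact h
    · exact absurd (List.mem_singleton.1 h) hne

end AncLemmas

section Main

open SimpleGraph Walk

variable {V : Type u} {𝒱 : Type v} {E : V → V → Prop} {T : SimpleGraph 𝒱}
  {B : 𝒱 → Finset V}

lemma bag_mem_of_anc (hTD : IsTreeDecomp E T B) {s : V} {x y z : 𝒱}
    (hy : s ∈ B y) (hz : s ∈ B z) (hx : Anc T y x z) : s ∈ B x := by
  classical
  obtain ⟨w⟩ := (hTD.2.2 s).preconnected ⟨y, hy⟩ ⟨z, hz⟩
  let W : T.Walk y z := w.map (SimpleGraph.Embedding.induce {v : 𝒱 | s ∈ B v}).toHom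
  have hsub : ∀ v ∈ W.support, s ∈ B v := by
    intro v hv
    rw [show W.support = _ from Walk.support_map _ _] at hv
    obtain ⟨u, hu, rfl⟩ := List.mem_map.1 hv
    exact u.2
  exact hsub x (W.support_bypass_subset (hx W.bypass W.bypass_isPath))

lemma key_bag (hT : T.IsTree) (hTD : IsTreeDecomp E T B) {root x y z : 𝒱} {s : V}
    (hy : s ∈ B y) (hz : s ∈ B z) (hxz : Anc T root x z)
    (H : ∀ w, Anc T root w z → Anc T root w y → Anc T root w x) : s ∈ B x := by
  by_cases hxy : Anc T root x y
  · exact bag_mem_of_anc hTD hy hz (anc_meet hT hxy hxz H)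
  · exact bag_mem_of_anc hTD hy hz (anc_reroot hT hxz hxy)

lemma bagRoot_exists [Fintype 𝒱] (hTD : IsTreeDecomp E T B) (root : 𝒱) {t : V} {z : 𝒱}
    (hz : t ∈ B z) : ∃ r : 𝒱, IsBagRoot T root B t r := by
  classical
  have hT := hTD.1
  obtain ⟨r, hrS, hrmin⟩ := Finset.exists_min_image (Finset.univ.filter (fun v => t ∈ B v))
      (fun v => (thePath hT root v).length) ⟨z, by simp [hz]⟩
  rw [Finset.mem_filter] at hrS
  refine ⟨r, hrS.2, ?_⟩
  have step : ∀ a c : 𝒱, Anc T root r a → T.Adj a c → t ∈ B c → Anc T root r c := by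
    intro a c hra hac hc
    have hpa := thePath_isPath hT root a
    have hr : r ∈ (thePath hT root a).support := (anc_iff hT).1 hra
    by_cases hcs : c ∈ (thePath hT root a).support
    · have hq : ((thePath hT root a).takeUntil c hcs).IsPath := hpa.takeUntil hcs
      by_cases hrq : r ∈ ((thePath hT root a).takeUntil c hcs).support
      · intro p hp; rw [eq_thePath hT p hp, ← eq_thePath hT _ hq]; exact hrq
      · exfalso
        have hrd : r ∈ ((thePath hT root a).dropUntil c hcs).support := by
          have h1 := hr
          rw [← (thePath hT root a).take_spec hcs, Walk.mem_support_append_iff] at h1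
          tauto
        have hrc : c ≠ r := by
          intro h; subst h; exact hrq (Walk.end_mem_support _)
        have hqp : (((thePath hT root a).takeUntil c hcs).append
            (((thePath hT root a).dropUntil c hcs).takeUntil r hrd)).IsPath :=
          append_takeUntil_isPath (by rw [(thePath hT root a).take_spec hcs]; exact hpa) hrd
        have e1 : (thePath hT root r).length =
            ((thePath hT root a).takeUntil c hcs).length +
            (((thePath hT root a).dropUntil c hcs).takeUntil r hrd).length := by
          rw [← eq_thePath hT _ hqp, Walk.length_append]
        have e2 : (thePath hT root c).length =
            ((thePath hT root a).takeUntil c hcs).length := by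
          rw [← eq_thePath hT _ hq]
        have hpos : 0 < (((thePath hT root a).dropUntil c hcs).takeUntil r hrd).length := by
          rcases Nat.eq_zero_or_pos (((thePath hT root a).dropUntil c hcs).takeUntil
            r hrd).length with h0 | h0
          · exact absurd (Walk.eq_of_length_eq_zero h0) hrc
          · exact h0
        have := hrmin c (by simp [hc])
        simp only [e1, e2] at this
        omega
    · have hcp : ((thePath hT root a).concat hac).IsPath := isPath_concat hpa hac hcs
      intro p hp
      rw [eq_thePath hT p hp, ← eq_thePath hT _ hcp, Walk.support_concat,
        List.mem_append]
      left; exact hr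
  intro w hw
  obtain ⟨W⟩ := (hTD.2.2 t).preconnected ⟨r, hrS.2⟩ ⟨w, hw⟩
  have main : ∀ (a b : {v : 𝒱 | t ∈ B v}) (W : (T.induce {v : 𝒱 | t ∈ B v}).Walk a b),
      Anc T root r ↑a → Anc T root r ↑b := by
    intro a b W
    induction W with
    | nil => exact id
    | @cons u c b h p ih => exact fun hra => ih (step ↑u ↑c hra h c.2)
  exact main _ _ W anc_refl

lemma eq_vs_of_not_thetaLe (hT : T.IsTree) {root : 𝒱} {ℓ : ℕ} {vs : ℕ → 𝒱}
    (hdft : IsDFT T root ℓ vs) {i : ℕ} (hi1 : 1 ≤ i) (hi2 : i ≤ ℓ) {w : 𝒱}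
    (hw : Anc T root w (vs i)) (hnot : w ∉ ThetaLe T root vs (i - 1)) : w = vs i := by
  by_contra hne
  rcases Nat.lt_or_ge i 2 with h1 | h2
  · have hieq : i = 1 := by omega
    subst hieq
    rw [hdft.first] at hw hne
    have := hw Walk.nil Walk.IsPath.nil
    simp at this
    exact hne this
  · have hadj := hdft.adj (i-1) (by omega) (by omega)
    have heq : i - 1 + 1 = i := by omega
    rw [heq] at hadj
    have hwa := anc_of_adj hT hadj hw hne
    exact hnot ⟨i-1, by omega, le_refl _, hwa⟩

end Main

section Final

open SimpleGraph Walk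

variable {V : Type u} {𝒱 : Type v} {E : V → V → Prop} {T : SimpleGraph 𝒱}
  {B : 𝒱 → Finset V}

lemma main_half [Fintype 𝒱] (hTD : IsTreeDecomp E T B) {root : 𝒱} {ℓ : ℕ} {vs : ℕ → 𝒱}
    (hdft : IsDFT T root ℓ vs) {i : ℕ} (hi1 : 1 ≤ i) (hi2 : i ≤ ℓ)
    {x : 𝒱} (hx : x ∈ Theta T root vs i) {s t : V} {z : 𝒱}
    (hs : s ∈ B z) (ht : t ∈ B z)
    (hsx : s ∈ PsiGtAt T root vs B i x) :
    t ∈ PsiGtAt T root vs B i x ∪ ↑(B x) := by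
  classical
  have hT := hTD.1
  obtain ⟨hsP, rs, hrs, h1, h2, h3⟩ := hsx
  have hrsz : Anc T root rs z := hrs.2 z hs
  have hxz : Anc T root x z := anc_trans h1 hrsz
  have hrsNot : rs ∉ ThetaLe T root vs (i-1) := by
    rintro ⟨j, hj1, hj2, hj3⟩
    exact hsP ⟨j, hj1, hj2, rs, hj3, hrs.1⟩
  by_cases htP : t ∈ PsiLe T root vs B (i-1)
  · right
    obtain ⟨j, hj1, hj2, y, hyT, hty⟩ := htP
    refine key_bag hT hTD hty ht hxz ?_
    intro w hwz hwy
    have hwv : Anc T root w (vs j) := anc_trans hwy hyT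
    rcases anc_comparable hT hwz hrsz with h | h
    · exact h3 w h ⟨j, hj1, by omega, hwv⟩
    · exact absurd ⟨j, hj1, hj2, anc_trans h hwv⟩ hrsNot
  · obtain ⟨rt, hrt⟩ := bagRoot_exists hTD root ht
    have hrtz : Anc T root rt z := hrt.2 z ht
    have hrtNot : rt ∉ ThetaLe T root vs (i-1) := by
      rintro ⟨j, hj1, hj2, hj3⟩
      exact htP ⟨j, hj1, hj2, rt, hj3, hrt.1⟩
    rcases anc_comparable hT hxz hrtz with hxrt | hrtx
    · left
      refine ⟨htP, rt, hrt, hxrt, h2, ?_⟩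
      intro y hyrt hyTh
      rcases anc_comparable hT hrsz hrtz with hsr | hrs2
      · rcases anc_comparable hT hyrt hsr with hy_rs | hrs_y
        · exact h3 y hy_rs hyTh
        · obtain ⟨j, hj1, hj2, hyv⟩ := hyTh
          have hrsx : Anc T root rs x :=
            h3 rs anc_refl ⟨j, hj1, hj2, anc_trans hrs_y hyv⟩
          have hxeq : x = rs := anc_antisymm hT h1 hrsx
          have hji : j = i := by
            by_contra hji
            exact hrsNot ⟨j, hj1, by omega, anc_trans hrs_y hyv⟩
          subst hji
          have hrseq : rs = vs j :=
            eq_vs_of_not_thetaLe hT hdft hi1 hi2 (hxeq ▸ hx) hrsNot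
          have hyeq : y = rs := anc_antisymm hT (hrseq ▸ hyv) hrs_y
          rw [hyeq, hxeq]
          exact anc_refl
      · exact h3 y (anc_trans hyrt hrs2) hyTh
    · right
      refine key_bag hT hTD hrt.1 ht hxz ?_
      intro w hwz hwrt
      exact anc_trans hwrt hrtx

end Final

/-- Every edge of `G` with one end in `Ψ_{>i-1}(x)` has its other
end in `Ψ_{>i-1}(x) ∪ B x`. -/
theorem psiGt_edge_closure {V : Type u} {𝒱 : Type v} [Fintype V] [Fintype 𝒱]
    (E : V → V → Prop) (T : SimpleGraph 𝒱) (B : 𝒱 → Finset V)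
    (hTD : IsTreeDecomp E T B) (root : 𝒱) (ℓ : ℕ) (vs : ℕ → 𝒱)
    (hdft : IsDFT T root ℓ vs)
    (i : ℕ) (hi1 : 1 ≤ i) (hi2 : i ≤ ℓ)
    (x : 𝒱) (hx : x ∈ Theta T root vs i)
    (s t : V) (hE : E s t) :
    (s ∈ PsiGtAt T root vs B i x → t ∈ PsiGtAt T root vs B i x ∪ ↑(B x)) ∧
    (t ∈ PsiGtAt T root vs B i x → s ∈ PsiGtAt T root vs B i x ∪ ↑(B x)) := by
  obtain ⟨z, hsz, htz⟩ := hTD.2.1 s t hE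
  exact ⟨fun hs => main_half hTD hdft hi1 hi2 hx hsz htz hs,
    fun ht => main_half hTD hdft hi1 hi2 hx htz hsz ht⟩
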